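/- Let T′ ∈ (0, ∞), α ≥ 0, and let f : [0, T′) → ℝ be continuous. Suppose that for every t₀ ∈ [0, T′) there exist δ > 0 and a function μ, differentiable on (t₀ − δ, t₀ + δ), such that μ(t₀) = f(t₀), μ(t) ≥ f(t) for all t ∈ [0, T′) ∩ (t₀ − δ, t₀ + δ), and μ′(t) > −α·μ(t)/(T′ − t) for all t ∈ (t₀ − δ, t₀ + δ) ∩ [0, T′). Then the function t ↦ (T′ − t)^(−α) · f(t) is strictly monotone increasing on [0, T′): for all 0 ≤ t₁ < t₀ < T′ one has (T′ − t₁)^(−α) f(t₁) < (T′ − t₀)^(−α) f(t₀). -/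

import Mathlib

/-- Left-local strict increase of the weighted quantity from the barrier. -/
lemma barrier_left_aux
    (T' α : ℝ) (hα : 0 ≤ α)
    (f : ℝ → ℝ)
    (hbar : ∀ t₀ ∈ Set.Ico (0 : ℝ) T',
      ∃ δ > 0, ∃ μ : ℝ → ℝ,
        (∀ t ∈ Set.Ioo (t₀ - δ) (t₀ + δ), DifferentiableAt ℝ μ t) ∧
        μ t₀ = f t₀ ∧
        (∀ t ∈ Set.Ico (0 : ℝ) T', t ∈ Set.Ioo (t₀ - δ) (t₀ + δ) → f t ≤ μ t) ∧
        (∀ t ∈ Set.Ioo (t₀ - δ) (t₀ + δ), t ∈ Set.Ico (0 : ℝ) T' →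
          -α * μ t / (T' - t) < deriv μ t))
    (t₀ : ℝ) (h0 : 0 < t₀) (hT : t₀ < T') :
    ∃ δ' > 0, ∀ t, t₀ - δ' < t → t < t₀ →
      (T' - t) ^ (-α) * f t < (T' - t₀) ^ (-α) * f t₀ := by
  obtain ⟨δ, hδ, μ, hdiff, hμ0, hge, hderiv⟩ := hbar t₀ ⟨h0.le, hT⟩
  refine ⟨min δ t₀, lt_min hδ h0, ?_⟩
  intro t ht1 ht2
  have htδ : t₀ - δ < t := lt_of_le_of_lt (by simp [min_le_left]; linarith [min_le_left δ t₀]) ht1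
  have ht0 : 0 < t := by have := min_le_right δ t₀; linarith
  set h : ℝ → ℝ := fun s => (T' - s) ^ (-α) * μ s with hh_def
  -- strict monotonicity of h on [t, t₀]
  have hsub : Set.Icc t t₀ ⊆ Set.Ioo (t₀ - δ) (t₀ + δ) := by
    intro s hs
    exact ⟨lt_of_lt_of_le htδ hs.1, lt_of_le_of_lt hs.2 (by linarith)⟩
  have hdiffh : ∀ s ∈ Set.Icc t t₀, DifferentiableAt ℝ h s := by
    intro s hs
    have hpos : 0 < T' - s := by have := hs.2; linarith
    have h1 : DifferentiableAt ℝ (fun s : ℝ => (T' - s) ^ (-α)) s := by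
      have : DifferentiableAt ℝ (fun s : ℝ => T' - s) s :=
        (differentiable_const T').differentiableAt.sub differentiable_id.differentiableAt
      exact this.rpow_const (Or.inl hpos.ne')
    exact h1.mul (hdiff s (hsub hs))
  have hmono : StrictMonoOn h (Set.Icc t t₀) := by
    apply strictMonoOn_of_deriv_pos (convex_Icc t t₀)
      (fun s hs => (hdiffh s hs).continuousAt.continuousWithinAt)
    intro s hs
    rw [interior_Icc] at hs
    have hsIoo : s ∈ Set.Ioo (t₀ - δ) (t₀ + δ) := hsub ⟨hs.1.le, hs.2.le⟩
    have hsIco : s ∈ Set.Ico (0 : ℝ) T' := ⟨by linarith [hs.1], by linarith [hs.2]⟩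
    have hpos : 0 < T' - s := by linarith [hsIco.2]
    have hw : HasDerivAt (fun s : ℝ => T' - s) (-1) s := (hasDerivAt_id s).const_sub T'
    have hpow : HasDerivAt (fun s : ℝ => (T' - s) ^ (-α)) (α * (T' - s) ^ (-α - 1)) s := by
      have hr := (Real.hasDerivAt_rpow_const (x := T' - s) (p := -α)
        (Or.inl hpos.ne')).comp s hw
      refine hr.congr_deriv ?_
      ring
    have hμd : HasDerivAt μ (deriv μ s) s := (hdiff s hsIoo).hasDerivAt
    have hH : HasDerivAt h (α * (T' - s) ^ (-α - 1) * μ s + (T' - s) ^ (-α) * deriv μ s) s :=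
      hpow.mul hμd
    rw [hH.deriv]
    have hlt := hderiv s hsIoo hsIco
    have hwpos : (0:ℝ) < (T' - s) ^ (-α) := Real.rpow_pos_of_pos hpos _
    have hmul := mul_lt_mul_of_pos_left hlt hwpos
    have hcalc : (T' - s) ^ (-α) * (-α * μ s / (T' - s)) =
        -(α * (T' - s) ^ (-α - 1) * μ s) := by
      have he : (T' - s) ^ (-α - 1) = (T' - s) ^ (-α) / (T' - s) := by
        rw [show (-α - 1 : ℝ) = -α - 1 from rfl, Real.rpow_sub hpos, Real.rpow_one]
      rw [he]
      ring
    rw [hcalc] at hmul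
    linarith
  have hwpos_t : (0:ℝ) < (T' - t) ^ (-α) := Real.rpow_pos_of_pos (by linarith) _
  have hgt : (T' - t) ^ (-α) * f t ≤ h t := by
    have := hge t ⟨ht0.le, by linarith⟩ (hsub ⟨le_rfl, ht2.le⟩)
    exact mul_le_mul_of_nonneg_left this hwpos_t.le
  have hlt : h t < h t₀ :=
    hmono ⟨le_rfl, ht2.le⟩ ⟨ht2.le, le_rfl⟩ ht2
  have : h t₀ = (T' - t₀) ^ (-α) * f t₀ := by rw [hh_def]; simp [hμ0]
  linarith

/-- Abstract barrier argument with weight: if `f` is continuous on `[0, T')` and at every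
`t₀ ∈ [0, T')` there is a differentiable barrier `μ` on `(t₀ - δ, t₀ + δ)` with
`μ t₀ = f t₀`, `μ ≥ f` on `[0, T') ∩ (t₀ - δ, t₀ + δ)` and
`μ' t > -α * μ t / (T' - t)` on `(t₀ - δ, t₀ + δ) ∩ [0, T')`, then
`t ↦ (T' - t) ^ (-α) * f t` is strictly increasing on `[0, T')`. -/
theorem barrier_strict_mono_weighted
    (T' α : ℝ) (hT' : 0 < T') (hα : 0 ≤ α)
    (f : ℝ → ℝ)
    (hf : ContinuousOn f (Set.Ico 0 T'))
    (hbar : ∀ t₀ ∈ Set.Ico (0 : ℝ) T',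
      ∃ δ > 0, ∃ μ : ℝ → ℝ,
        (∀ t ∈ Set.Ioo (t₀ - δ) (t₀ + δ), DifferentiableAt ℝ μ t) ∧
        μ t₀ = f t₀ ∧
        (∀ t ∈ Set.Ico (0 : ℝ) T', t ∈ Set.Ioo (t₀ - δ) (t₀ + δ) → f t ≤ μ t) ∧
        (∀ t ∈ Set.Ioo (t₀ - δ) (t₀ + δ), t ∈ Set.Ico (0 : ℝ) T' →
          -α * μ t / (T' - t) < deriv μ t)) :
    ∀ t₁ t₀ : ℝ, 0 ≤ t₁ → t₁ < t₀ → t₀ < T' →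
      (T' - t₁) ^ (-α) * f t₁ < (T' - t₀) ^ (-α) * f t₀ := by
  intro t₁ t₀ ht₁ h12 h0T
  set g : ℝ → ℝ := fun t => (T' - t) ^ (-α) * f t with hg_def
  have hKsub : Set.Icc t₁ t₀ ⊆ Set.Ico 0 T' := by
    intro s hs; exact ⟨le_trans ht₁ hs.1, lt_of_le_of_lt hs.2 h0T⟩
  have hgcont : ContinuousOn g (Set.Icc t₁ t₀) := by
    apply ContinuousOn.mul
    · apply ContinuousOn.rpow_const
      · exact (continuous_const.sub continuous_id).continuousOn
      · intro s hs
        exact Or.inl (by have h2 := lt_of_le_of_lt hs.2 h0T; intro h; nlinarith)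
    · exact hf.mono hKsub
  obtain ⟨m, hmK, hmin⟩ := (isCompact_Icc).exists_isMinOn (Set.nonempty_Icc.2 h12.le) hgcont
  by_contra hcon
  push_neg at hcon
  -- produce a minimizing point p with t₁ < p ≤ t₀
  have hmin' := isMinOn_iff.mp hmin
  have hP : ∃ p, t₁ < p ∧ p ≤ t₀ ∧ ∀ s ∈ Set.Icc t₁ t₀, g p ≤ g s := by
    rcases eq_or_lt_of_le hmK.1 with heq | hlt
    · refine ⟨t₀, h12, le_rfl, fun s hs => ?_⟩
      calc g t₀ ≤ g t₁ := hcon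
        _ = g m := by rw [heq]
        _ ≤ g s := hmin' s hs
    · exact ⟨m, hlt, hmK.2, hmin'⟩
  obtain ⟨p, hp1, hp2, hpmin⟩ := hP
  have hp0 : 0 < p := lt_of_le_of_lt ht₁ hp1
  have hpT : p < T' := lt_of_le_of_lt hp2 h0T
  obtain ⟨δ', hδ', hloc⟩ := barrier_left_aux T' α hα f hbar p hp0 hpT
  set t : ℝ := max t₁ (p - δ' / 2) with ht_def
  have htp : t < p := max_lt hp1 (by linarith)
  have htδ : p - δ' < t := lt_of_lt_of_le (by linarith) (le_max_right _ _)
  have htK : t ∈ Set.Icc t₁ t₀ := ⟨le_max_left _ _, le_trans htp.le hp2⟩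
  have h1 := hloc t htδ htp
  have h2 : (T' - p) ^ (-α) * f p ≤ (T' - t) ^ (-α) * f t := hpmin t htK
  linarith
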